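/- For every a ∈ ℝ and every k ∈ ℕ, ∫_ℝ |h_k(x + ia)|² dx = ∫_ℝ e^{2ax} h_k(x)² dx, where h_k(x + ia) is the value of the entire extension of the Hermite function h_k at x + ia. -/

import Mathlib

open MeasureTheory

/-- The physicists' Hermite polynomial `H_k`, extended to an entire function on `ℂ`. -/
noncomputable def physHermiteC (k : ℕ) (z : ℂ) : ℂ :=
  (-1) ^ k * Complex.exp (z ^ 2) * iteratedDeriv k (fun w : ℂ => Complex.exp (-w ^ 2)) z

/-- The Hermite function `h_k` as an entire function on `ℂ`. -/
noncomputable def hermiteFunC (k : ℕ) (z : ℂ) : ℂ :=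
  ((Real.sqrt (2 ^ k * Nat.factorial k * Real.sqrt Real.pi) : ℝ) : ℂ)⁻¹ *
    physHermiteC k z * Complex.exp (-z ^ 2 / 2)

/-- The physicists' Hermite polynomial `H_k` on `ℝ`. -/
noncomputable def physHermiteR (k : ℕ) (x : ℝ) : ℝ :=
  (-1) ^ k * Real.exp (x ^ 2) * iteratedDeriv k (fun t : ℝ => Real.exp (-t ^ 2)) x

/-- The Hermite function `h_k` on `ℝ`. -/
noncomputable def hermiteFunR (k : ℕ) (x : ℝ) : ℝ :=
  (Real.sqrt (2 ^ k * Nat.factorial k * Real.sqrt Real.pi))⁻¹ *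
    physHermiteR k x * Real.exp (-x ^ 2 / 2)

open Polynomial

/-- Physicists' Hermite polynomials over ℝ, defined recursively. -/
noncomputable def PHr : ℕ → Polynomial ℝ
  | 0 => 1
  | (k+1) => 2 * X * PHr k - derivative (PHr k)

/-- Physicists' Hermite polynomials over ℂ. -/
noncomputable def PHc (k : ℕ) : Polynomial ℂ := (PHr k).map Complex.ofRealHom

lemma PHc_zero : PHc 0 = 1 := by simp [PHc, PHr]

lemma PHc_succ (k : ℕ) : PHc (k+1) = 2 * X * PHc k - derivative (PHc k) := by
  simp [PHc, PHr, Polynomial.derivative_map, Polynomial.map_mul, Polynomial.map_ofNat]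

lemma natDegree_PHr_le (k : ℕ) : (PHr k).natDegree ≤ k := by
  induction k with
  | zero => simp [PHr]
  | succ k ih =>
    show (2 * X * PHr k - derivative (PHr k)).natDegree ≤ k + 1
    refine (natDegree_sub_le _ _).trans (max_le ?_ ?_)
    · refine (natDegree_mul_le).trans ?_
      have : (2 * X : Polynomial ℝ).natDegree ≤ 1 :=
        (natDegree_mul_le).trans (by simp)
      omega
    · exact (natDegree_derivative_le _).trans (by omega)

lemma deriv_PHr (k : ℕ) : derivative (PHr (k+1)) = C ((2 : ℝ) * (k+1)) * PHr k := by
  induction k with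
  | zero =>
    show derivative (2 * X * PHr 0 - derivative (PHr 0)) = _
    simp [PHr]
    rfl
  | succ k ih =>
    show derivative (2 * X * PHr (k+1) - derivative (PHr (k+1))) = _
    rw [derivative_sub, derivative_mul, ih, derivative_mul, derivative_mul, derivative_C]
    have hdef' : PHr (k+1+1) = 2 * X * PHr (k+1) - derivative (PHr (k+1)) := rfl
    have hdef : PHr (k+1) = 2 * X * PHr k - derivative (PHr k) := rfl
    simp only [map_mul, map_add, map_one, map_ofNat, Nat.cast_add, Nat.cast_one]
    rw [hdef]
    simp only [derivative_ofNat, derivative_X]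
    ring

lemma iterate_deriv_PHr (n m : ℕ) :
    ∃ c : ℝ, derivative^[n] (PHr (n + m)) = C c * PHr m := by
  induction n with
  | zero => exact ⟨1, by simp⟩
  | succ n ih =>
    obtain ⟨c, hc⟩ := ih
    refine ⟨(2 * (n + m + 1)) * c, ?_⟩
    have : n + 1 + m = (n + m) + 1 := by omega
    rw [this, Function.iterate_succ_apply, deriv_PHr]
    have : ((n:ℝ) + m + 1) = ((n + m : ℕ) : ℝ) + 1 := by push_cast; ring
    rw [this, Polynomial.iterate_derivative_C_mul, hc, ← mul_assoc, ← C_mul]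

/-- Rodrigues formula over ℝ. -/
lemma rodR (k : ℕ) (x : ℝ) :
    iteratedDeriv k (fun t : ℝ => Real.exp (-t ^ 2)) x
      = (-1) ^ k * (PHr k).eval x * Real.exp (-x ^ 2) := by
  induction k generalizing x with
  | zero => simp [PHr]
  | succ k ih =>
    rw [iteratedDeriv_succ]
    have hfun : iteratedDeriv k (fun t : ℝ => Real.exp (-t ^ 2))
        = fun x => (-1) ^ k * (PHr k).eval x * Real.exp (-x ^ 2) := funext ih
    rw [hfun]
    have hD : HasDerivAt (fun x : ℝ => (-1) ^ k * (PHr k).eval x * Real.exp (-x ^ 2))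
        ((-1) ^ (k+1) * (PHr (k+1)).eval x * Real.exp (-x ^ 2)) x := by
      have h1 : HasDerivAt (fun x : ℝ => (PHr k).eval x * Real.exp (-x ^ 2))
          ((derivative (PHr k)).eval x * Real.exp (-x ^ 2)
            + (PHr k).eval x * (Real.exp (-x ^ 2) * -(2 * x))) x := by
        have he : HasDerivAt (fun x : ℝ => Real.exp (-x ^ 2))
            (Real.exp (-x ^ 2) * -(2 * x)) x := by
          simpa using ((hasDerivAt_pow 2 x).neg).exp
        exact ((PHr k).hasDerivAt x).mul he
      have h2 := h1.const_mul ((-1 : ℝ) ^ k)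
      have harr : (fun y => (-1:ℝ)^k * ((PHr k).eval y * Real.exp (-y^2)))
          = fun y => (-1:ℝ)^k * (PHr k).eval y * Real.exp (-y^2) := by
        funext y; ring
      rw [harr] at h2
      refine h2.congr_deriv ?_
      have hdef : PHr (k+1) = 2 * X * PHr k - derivative (PHr k) := rfl
      rw [hdef]
      simp [pow_succ]
      ring
    exact hD.deriv

/-- Rodrigues formula over ℂ. -/
lemma rodC (k : ℕ) (z : ℂ) :
    iteratedDeriv k (fun w : ℂ => Complex.exp (-w ^ 2)) z
      = (-1) ^ k * (PHc k).eval z * Complex.exp (-z ^ 2) := by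
  induction k generalizing z with
  | zero => simp [PHc_zero]
  | succ k ih =>
    rw [iteratedDeriv_succ]
    have hfun : iteratedDeriv k (fun w : ℂ => Complex.exp (-w ^ 2))
        = fun z => (-1) ^ k * (PHc k).eval z * Complex.exp (-z ^ 2) := funext ih
    rw [hfun]
    have hD : HasDerivAt (fun z : ℂ => (-1) ^ k * (PHc k).eval z * Complex.exp (-z ^ 2))
        ((-1) ^ (k+1) * (PHc (k+1)).eval z * Complex.exp (-z ^ 2)) z := by
      have h1 : HasDerivAt (fun z : ℂ => (PHc k).eval z * Complex.exp (-z ^ 2))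
          ((derivative (PHc k)).eval z * Complex.exp (-z ^ 2)
            + (PHc k).eval z * (Complex.exp (-z ^ 2) * -(2 * z))) z := by
        have he : HasDerivAt (fun z : ℂ => Complex.exp (-z ^ 2))
            (Complex.exp (-z ^ 2) * -(2 * z)) z := by
          simpa using ((hasDerivAt_pow 2 z).neg).cexp
        exact ((PHc k).hasDerivAt z).mul he
      have h2 := h1.const_mul ((-1 : ℂ) ^ k)
      have harr : (fun y => (-1:ℂ)^k * ((PHc k).eval y * Complex.exp (-y^2)))
          = fun y => (-1:ℂ)^k * (PHc k).eval y * Complex.exp (-y^2) := by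
        funext y; ring
      rw [harr] at h2
      refine h2.congr_deriv ?_
      rw [PHc_succ]
      simp [pow_succ]
      ring
    exact hD.deriv


lemma physHermiteC_eq (k : ℕ) (z : ℂ) : physHermiteC k z = (PHc k).eval z := by
  unfold physHermiteC
  rw [rodC]
  rw [show (-1:ℂ)^k * Complex.exp (z^2) * ((-1:ℂ)^k * (PHc k).eval z * Complex.exp (-z^2))
      = (((-1:ℂ)*(-1))^k) * (Complex.exp (z^2) * Complex.exp (-z^2)) * (PHc k).eval z from by
    rw [mul_pow]; ring]
  rw [← Complex.exp_add]
  simp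

lemma physHermiteR_eq (k : ℕ) (x : ℝ) : physHermiteR k x = (PHr k).eval x := by
  unfold physHermiteR
  rw [rodR]
  rw [show (-1:ℝ)^k * Real.exp (x^2) * ((-1:ℝ)^k * (PHr k).eval x * Real.exp (-x^2))
      = (((-1:ℝ)*(-1))^k) * (Real.exp (x^2) * Real.exp (-x^2)) * (PHr k).eval x from by
    rw [mul_pow]; ring]
  rw [← Real.exp_add]
  simp

lemma conj_eval_PHc (k : ℕ) (z : ℂ) :
    (starRingEnd ℂ) ((PHc k).eval z) = (PHc k).eval ((starRingEnd ℂ) z) := by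
  unfold PHc
  rw [Polynomial.eval_map, Polynomial.eval_map, Polynomial.hom_eval₂]
  congr 1
  ext r : 1
  simp [Complex.conj_ofReal]

lemma ofReal_eval_PHc (k : ℕ) (x : ℝ) :
    (PHc k).eval ((x : ℝ) : ℂ) = (((PHr k).eval x : ℝ) : ℂ) := by
  unfold PHc
  rw [show ((x : ℝ) : ℂ) = Complex.ofRealHom x from rfl, Polynomial.eval_map,
    Polynomial.eval₂_hom]
  rfl

lemma integrable_pow_gauss (n : ℕ) :
    Integrable (fun x : ℝ => x ^ n * Real.exp (-x ^ 2)) := by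
  have h := integrable_rpow_mul_exp_neg_mul_sq (b := 1) one_pos
    (s := (n : ℝ)) (by exact_mod_cast neg_one_lt_zero.trans_le n.cast_nonneg)
  refine h.congr (Filter.Eventually.of_forall fun x => ?_)
  simp only []
  rw [Real.rpow_natCast, neg_one_mul]

lemma integrable_poly_gauss (p : Polynomial ℝ) :
    Integrable (fun x : ℝ => p.eval x * Real.exp (-x ^ 2)) := by
  have hrep : (fun x : ℝ => p.eval x * Real.exp (-x ^ 2))
      = fun x : ℝ => ∑ i ∈ Finset.range (p.natDegree + 1),
          p.coeff i * (x ^ i * Real.exp (-x ^ 2)) := by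
    funext x
    rw [Polynomial.eval_eq_sum_range, Finset.sum_mul]
    simp [mul_assoc]
  rw [hrep]
  exact integrable_finset_sum _ fun i _ => (integrable_pow_gauss i).const_mul _

lemma integrable_poly2_gauss (p q : Polynomial ℝ) :
    Integrable (fun x : ℝ => p.eval x * (q.eval x * Real.exp (-x ^ 2))) := by
  refine (integrable_poly_gauss (p * q)).congr
    (Filter.Eventually.of_forall fun x => ?_)
  simp [Polynomial.eval_mul]; ring

/-- Repeated integration by parts against the Rodrigues form. -/
lemma ibp_iter : ∀ (j : ℕ) (p : Polynomial ℝ),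
    ∫ x : ℝ, p.eval x * ((PHr j).eval x * Real.exp (-x ^ 2))
      = ∫ x : ℝ, (derivative^[j] p).eval x * Real.exp (-x ^ 2) := by
  intro j
  induction j with
  | zero =>
    intro p
    simp [PHr]
  | succ j ih =>
    intro p
    have step : ∫ x : ℝ, p.eval x * ((PHr (j+1)).eval x * Real.exp (-x ^ 2))
        = ∫ x : ℝ, (derivative p).eval x * ((PHr j).eval x * Real.exp (-x ^ 2)) := by
      have hibp := integral_mul_deriv_eq_deriv_mul_of_integrable
        (u := fun x : ℝ => p.eval x)
        (u' := fun x : ℝ => (derivative p).eval x)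
        (v := fun x : ℝ => -((PHr j).eval x * Real.exp (-x ^ 2)))
        (v' := fun x : ℝ => (PHr (j+1)).eval x * Real.exp (-x ^ 2))
        (fun x _ => p.hasDerivAt x)
        (fun x _ => ?_) ?_ ?_ ?_
      · beta_reduce at hibp
        rw [hibp]
        simp only [mul_neg, integral_neg, neg_neg]
      · have he : HasDerivAt (fun x : ℝ => Real.exp (-x ^ 2))
            (Real.exp (-x ^ 2) * -(2 * x)) x := by
          simpa using ((hasDerivAt_pow 2 x).neg).exp
        have h1 := (((PHr j).hasDerivAt x).mul he).neg
        refine h1.congr_deriv ?_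
        have hdef : PHr (j+1) = 2 * X * PHr j - derivative (PHr j) := rfl
        rw [hdef]
        simp
        ring
      · exact (integrable_poly2_gauss p (PHr (j+1)))
      · refine ((integrable_poly2_gauss (derivative p) (PHr j)).neg).congr
          (Filter.Eventually.of_forall fun x => ?_)
        simp [Pi.mul_apply]
      · refine ((integrable_poly2_gauss p (PHr j)).neg).congr
          (Filter.Eventually.of_forall fun x => ?_)
        simp [Pi.mul_apply]
    rw [step, ih (derivative p), ← Function.iterate_succ_apply]


lemma ortho_aux (k m n : ℕ) (hmn : m < n) :
    ∫ x : ℝ, (derivative^[m] (PHr k)).eval x * (derivative^[n] (PHr k)).eval x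
      * Real.exp (-x ^ 2) = 0 := by
  by_cases hm : k < m
  · have h0 : derivative^[m] (PHr k) = 0 :=
      Polynomial.iterate_derivative_eq_zero ((natDegree_PHr_le k).trans_lt hm)
    simp [h0]
  · push_neg at hm
    obtain ⟨c, hc⟩ := iterate_deriv_PHr m (k - m)
    rw [show m + (k - m) = k from by omega] at hc
    have hrw : (fun x : ℝ => (derivative^[m] (PHr k)).eval x * (derivative^[n] (PHr k)).eval x
        * Real.exp (-x ^ 2))
        = fun x : ℝ => c * ((derivative^[n] (PHr k)).eval x
            * ((PHr (k - m)).eval x * Real.exp (-x ^ 2))) := by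
      funext x
      rw [hc]
      simp
      ring
    rw [hrw, integral_const_mul, ibp_iter (k - m) (derivative^[n] (PHr k)),
      ← Function.iterate_add_apply]
    have hz : derivative^[k - m + n] (PHr k) = 0 :=
      Polynomial.iterate_derivative_eq_zero
        ((natDegree_PHr_le k).trans_lt (by omega))
    simp [hz]

lemma ortho (k m n : ℕ) (hmn : m ≠ n) :
    ∫ x : ℝ, (derivative^[m] (PHr k)).eval x * (derivative^[n] (PHr k)).eval x
      * Real.exp (-x ^ 2) = 0 := by
  rcases lt_or_gt_of_ne hmn with h | h
  · exact ortho_aux k m n h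
  · have := ortho_aux k n m h
    rw [← this]
    congr 1
    funext x
    ring

/-- The diagonal coefficients. -/
noncomputable def dcoef (k m n : ℕ) : ℝ :=
  ∫ x : ℝ, ((PHr k).hasseDeriv m).eval x * ((PHr k).hasseDeriv n).eval x * Real.exp (-x ^ 2)

lemma hasseDeriv_eval_eq (q : Polynomial ℝ) (m : ℕ) (x : ℝ) :
    (q.hasseDeriv m).eval x = ((m.factorial : ℝ))⁻¹ * (derivative^[m] q).eval x := by
  have h := congrFun (Polynomial.factorial_smul_hasseDeriv (R := ℝ) m) q
  have h2 : (m.factorial : ℝ) * (q.hasseDeriv m).eval x = (derivative^[m] q).eval x := by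
    rw [← h]
    simp [Polynomial.eval_smul, nsmul_eq_mul]
  field_simp
  linarith [h2]

lemma dcoef_eq_zero (k m n : ℕ) (hmn : m ≠ n) : dcoef k m n = 0 := by
  unfold dcoef
  have hrw : (fun x : ℝ => ((PHr k).hasseDeriv m).eval x * ((PHr k).hasseDeriv n).eval x
      * Real.exp (-x ^ 2))
      = fun x : ℝ => ((m.factorial : ℝ))⁻¹ * ((n.factorial : ℝ))⁻¹
          * ((derivative^[m] (PHr k)).eval x * (derivative^[n] (PHr k)).eval x
            * Real.exp (-x ^ 2)) := by
    funext x
    rw [hasseDeriv_eval_eq, hasseDeriv_eval_eq]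
    ring
  rw [hrw]
  rw [show (fun x : ℝ => ((m.factorial : ℝ))⁻¹ * ((n.factorial : ℝ))⁻¹
      * ((derivative^[m] (PHr k)).eval x * (derivative^[n] (PHr k)).eval x
        * Real.exp (-x ^ 2)))
      = fun x : ℝ => (((m.factorial : ℝ))⁻¹ * ((n.factorial : ℝ))⁻¹)
        * ((derivative^[m] (PHr k)).eval x * (derivative^[n] (PHr k)).eval x
          * Real.exp (-x ^ 2)) from by funext x; ring]
  rw [integral_const_mul, ortho k m n hmn, mul_zero]

lemma hasseDeriv_map_c (p : Polynomial ℝ) (m : ℕ) :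
    (p.map Complex.ofRealHom).hasseDeriv m = (p.hasseDeriv m).map Complex.ofRealHom := by
  ext n
  simp [Polynomial.hasseDeriv_coeff, Polynomial.coeff_map]

lemma eval_hasseDeriv_PHc (k m : ℕ) (x : ℝ) :
    ((PHc k).hasseDeriv m).eval ((x : ℝ) : ℂ)
      = ((((PHr k).hasseDeriv m).eval x : ℝ) : ℂ) := by
  unfold PHc
  rw [hasseDeriv_map_c, show ((x : ℝ) : ℂ) = Complex.ofRealHom x from rfl,
    Polynomial.eval_map, Polynomial.eval₂_hom]
  rfl

lemma natDegree_PHc_le (k : ℕ) : (PHc k).natDegree ≤ k :=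
  (Polynomial.natDegree_map_le).trans (natDegree_PHr_le k)

lemma expansion_PHc (k : ℕ) (x : ℝ) (u : ℂ) :
    (PHc k).eval ((x : ℂ) + u)
      = ∑ m ∈ Finset.range (k + 1), ((PHc k).hasseDeriv m).eval ((x : ℝ) : ℂ) * u ^ m := by
  rw [add_comm, ← Polynomial.taylor_eval]
  rw [Polynomial.eval_eq_sum_range' (n := k + 1)
    (by rw [Polynomial.natDegree_taylor]; exact Nat.lt_succ_of_le (natDegree_PHc_le k))]
  refine Finset.sum_congr rfl fun m _ => ?_
  rw [Polynomial.taylor_coeff]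

noncomputable def Sint (k : ℕ) (u v : ℂ) : ℂ :=
  ∫ x : ℝ, (PHc k).eval ((x : ℂ) + u) * (PHc k).eval ((x : ℂ) + v) * (Real.exp (-x ^ 2) : ℂ)

lemma S_rep_fun (k : ℕ) (u v : ℂ) :
    (fun x : ℝ => (PHc k).eval ((x : ℂ) + u) * (PHc k).eval ((x : ℂ) + v)
        * (Real.exp (-x ^ 2) : ℂ))
      = fun x : ℝ => ∑ m ∈ Finset.range (k + 1), ∑ n ∈ Finset.range (k + 1),
          (u ^ m * v ^ n) * ((((PHr k).hasseDeriv m).eval x * ((PHr k).hasseDeriv n).eval x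
            * Real.exp (-x ^ 2) : ℝ) : ℂ) := by
  funext x
  rw [expansion_PHc, expansion_PHc, Finset.sum_mul_sum, Finset.sum_mul]
  refine Finset.sum_congr rfl fun m _ => ?_
  rw [Finset.sum_mul]
  refine Finset.sum_congr rfl fun n _ => ?_
  rw [eval_hasseDeriv_PHc, eval_hasseDeriv_PHc]
  push_cast
  ring

lemma S_term_integrable (k : ℕ) (u v : ℂ) (m n : ℕ) :
    Integrable (fun x : ℝ => (u ^ m * v ^ n)
      * ((((PHr k).hasseDeriv m).eval x * ((PHr k).hasseDeriv n).eval x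
        * Real.exp (-x ^ 2) : ℝ) : ℂ)) := by
  have hr : Integrable (fun x : ℝ => ((PHr k).hasseDeriv m).eval x
      * ((PHr k).hasseDeriv n).eval x * Real.exp (-x ^ 2)) := by
    refine (integrable_poly2_gauss ((PHr k).hasseDeriv m) ((PHr k).hasseDeriv n)).congr
      (Filter.Eventually.of_forall fun x => ?_)
    ring
  exact (hr.ofReal (𝕜 := ℂ)).const_mul _

lemma S_integrand_integrable (k : ℕ) (u v : ℂ) :
    Integrable (fun x : ℝ => (PHc k).eval ((x : ℂ) + u) * (PHc k).eval ((x : ℂ) + v)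
      * (Real.exp (-x ^ 2) : ℂ)) := by
  rw [S_rep_fun]
  exact integrable_finset_sum _ fun m _ =>
    integrable_finset_sum _ fun n _ => S_term_integrable k u v m n

lemma S_eq_sum (k : ℕ) (u v : ℂ) :
    Sint k u v = ∑ m ∈ Finset.range (k + 1), ∑ n ∈ Finset.range (k + 1),
      (u ^ m * v ^ n) * ((dcoef k m n : ℝ) : ℂ) := by
  unfold Sint
  rw [S_rep_fun]
  rw [integral_finset_sum _ fun m _ =>
    integrable_finset_sum _ fun n _ => S_term_integrable k u v m n]
  refine Finset.sum_congr rfl fun m _ => ?_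
  rw [integral_finset_sum _ fun n _ => S_term_integrable k u v m n]
  refine Finset.sum_congr rfl fun n _ => ?_
  rw [integral_const_mul]
  congr 1
  rw [show (fun a : ℝ => ((((PHr k).hasseDeriv m).eval a * ((PHr k).hasseDeriv n).eval a
      * Real.exp (-a ^ 2) : ℝ) : ℂ))
    = fun a : ℝ => ((RCLike.ofReal (K := ℂ)) (((PHr k).hasseDeriv m).eval a
        * ((PHr k).hasseDeriv n).eval a * Real.exp (-a ^ 2))) from rfl]
  rw [integral_ofReal]
  rfl

lemma S_key (k : ℕ) (a : ℝ) :
    Sint k ((a : ℂ) * Complex.I) (-((a : ℂ) * Complex.I)) = Sint k (a : ℂ) (a : ℂ) := by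
  rw [S_eq_sum, S_eq_sum]
  refine Finset.sum_congr rfl fun m _ => Finset.sum_congr rfl fun n _ => ?_
  by_cases hmn : m = n
  · subst hmn
    congr 1
    rw [← mul_pow, ← mul_pow]
    congr 1
    simp [Complex.I_sq]
    ring_nf
    simp [Complex.I_sq]
  · rw [dcoef_eq_zero k m n hmn]
    simp


/-- `∫ℝ |h_k(x + ia)|² dx = ∫ℝ e^{2ax} h_k(x)² dx`. -/
theorem stmt_3 (a : ℝ) (k : ℕ) :
    ∫ x : ℝ, ‖hermiteFunC k ((x : ℂ) + a * Complex.I)‖ ^ 2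
      = ∫ x : ℝ, Real.exp (2 * a * x) * hermiteFunR k x ^ 2 := by
  set c : ℝ := Real.sqrt (2 ^ k * Nat.factorial k * Real.sqrt Real.pi) with hc
  have hc0 : 0 ≤ c := Real.sqrt_nonneg _
  -- pointwise identity for the LHS integrand
  have hL : ∀ x : ℝ, ‖hermiteFunC k ((x : ℂ) + a * Complex.I)‖ ^ 2
      = (c⁻¹ ^ 2 * Real.exp (a ^ 2))
        * ((PHc k).eval ((x : ℂ) + (a : ℂ) * Complex.I)
            * (PHc k).eval ((x : ℂ) + -((a : ℂ) * Complex.I))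
            * (Real.exp (-x ^ 2) : ℂ)).re := by
    intro x
    set z : ℂ := (x : ℂ) + (a : ℂ) * Complex.I with hz
    have hfun : hermiteFunC k z = ((c : ℝ) : ℂ)⁻¹ * (PHc k).eval z * Complex.exp (-z^2/2) := by
      unfold hermiteFunC
      rw [physHermiteC_eq]
    have hconj : (starRingEnd ℂ) ((PHc k).eval z) = (PHc k).eval ((x : ℂ) + -((a:ℂ) * Complex.I)) := by
      rw [conj_eval_PHc]
      congr 1
      simp [hz, Complex.conj_ofReal]
    have hnormsq : ‖(PHc k).eval z‖ ^ 2
        = ((PHc k).eval z * (PHc k).eval ((x : ℂ) + -((a:ℂ) * Complex.I))).re := by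
      rw [← hconj, Complex.mul_conj]
      simp [Complex.sq_norm]
    have hexp : ‖Complex.exp (-z^2/2)‖ ^ 2 = Real.exp (a ^ 2) * Real.exp (-x ^ 2) := by
      rw [Complex.norm_exp, sq, ← Real.exp_add, ← Real.exp_add]
      congr 1
      have hre : (-z^2/2).re = (a^2 - x^2)/2 := by
        simp [hz, pow_two, Complex.mul_re, Complex.add_re, Complex.add_im, Complex.mul_im,
          Complex.ofReal_re, Complex.ofReal_im, Complex.I_re, Complex.I_im, Complex.div_re,
          Complex.normSq]
        try ring
      rw [hre]
      ring
    have hnormc : ‖((c : ℝ) : ℂ)⁻¹‖ = c⁻¹ := by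
      rw [norm_inv, Complex.norm_real, Real.norm_eq_abs, abs_of_nonneg hc0]
    calc ‖hermiteFunC k z‖ ^ 2
        = (‖((c : ℝ) : ℂ)⁻¹‖ * ‖(PHc k).eval z‖ * ‖Complex.exp (-z^2/2)‖) ^ 2 := by
          rw [hfun, norm_mul, norm_mul]
      _ = ‖((c : ℝ) : ℂ)⁻¹‖ ^ 2 * ‖(PHc k).eval z‖ ^ 2 * ‖Complex.exp (-z^2/2)‖ ^ 2 := by
          ring
      _ = c⁻¹ ^ 2 * ((PHc k).eval z * (PHc k).eval ((x : ℂ) + -((a:ℂ) * Complex.I))).re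
            * (Real.exp (a ^ 2) * Real.exp (-x ^ 2)) := by
          rw [hnormc, hnormsq, hexp]
      _ = (c⁻¹ ^ 2 * Real.exp (a ^ 2))
            * (((PHc k).eval z * (PHc k).eval ((x : ℂ) + -((a:ℂ) * Complex.I))
              * (Real.exp (-x ^ 2) : ℂ)).re) := by
          rw [show ((PHc k).eval z * (PHc k).eval ((x : ℂ) + -((a:ℂ) * Complex.I))
              * (Real.exp (-x ^ 2) : ℂ)).re
            = ((PHc k).eval z * (PHc k).eval ((x : ℂ) + -((a:ℂ) * Complex.I))).re
              * Real.exp (-x ^ 2) from by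
            rw [Complex.mul_re]
            simp [-Complex.ofReal_exp]]
          ring
  -- pointwise identity for the RHS integrand
  have hR : ∀ x : ℝ, Real.exp (2 * a * x) * hermiteFunR k x ^ 2
      = (c⁻¹ ^ 2 * Real.exp (a ^ 2)) * ((PHr k).eval x ^ 2 * Real.exp (-(x - a) ^ 2)) := by
    intro x
    unfold hermiteFunR
    rw [physHermiteR_eq, ← hc]
    have h1 : Real.exp (-x^2/2) ^ 2 = Real.exp (-x^2) := by
      rw [sq, ← Real.exp_add]; congr 1; ring
    have key : Real.exp (2*a*x) * Real.exp (-x^2)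
        = Real.exp (a^2) * Real.exp (-(x-a)^2) := by
      rw [← Real.exp_add, ← Real.exp_add]; congr 1; ring
    calc Real.exp (2*a*x) * (c⁻¹ * (PHr k).eval x * Real.exp (-x^2/2))^2
        = (Real.exp (2*a*x) * Real.exp (-x^2)) * (c⁻¹^2 * (PHr k).eval x^2) := by
          rw [mul_pow, mul_pow, h1]; ring
      _ = (c⁻¹ ^ 2 * Real.exp (a ^ 2)) * ((PHr k).eval x ^ 2 * Real.exp (-(x - a) ^ 2)) := by
          rw [key]; ring
  calc ∫ x : ℝ, ‖hermiteFunC k ((x : ℂ) + a * Complex.I)‖ ^ 2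
      = ∫ x : ℝ, (c⁻¹ ^ 2 * Real.exp (a ^ 2))
          * ((PHc k).eval ((x : ℂ) + (a : ℂ) * Complex.I)
              * (PHc k).eval ((x : ℂ) + -((a : ℂ) * Complex.I))
              * (Real.exp (-x ^ 2) : ℂ)).re := by
        exact MeasureTheory.integral_congr_ae (Filter.Eventually.of_forall hL)
    _ = (c⁻¹ ^ 2 * Real.exp (a ^ 2))
          * (Sint k ((a : ℂ) * Complex.I) (-((a : ℂ) * Complex.I))).re := by
        rw [integral_const_mul]
        congr 1
        unfold Sint
        have h := integral_re (μ := (volume : Measure ℝ))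
          (f := fun x : ℝ => (PHc k).eval ((x : ℂ) + (a : ℂ) * Complex.I)
            * (PHc k).eval ((x : ℂ) + -((a : ℂ) * Complex.I)) * (Real.exp (-x ^ 2) : ℂ))
          (S_integrand_integrable k _ _)
        simpa using h
    _ = (c⁻¹ ^ 2 * Real.exp (a ^ 2)) * (Sint k ((a : ℝ) : ℂ) ((a : ℝ) : ℂ)).re := by
        rw [S_key]
    _ = (c⁻¹ ^ 2 * Real.exp (a ^ 2))
          * ∫ x : ℝ, (PHr k).eval (x + a) ^ 2 * Real.exp (-x ^ 2) := by
        congr 1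
        unfold Sint
        have hpt : (fun x : ℝ => (PHc k).eval ((x : ℂ) + ((a : ℝ) : ℂ))
            * (PHc k).eval ((x : ℂ) + ((a : ℝ) : ℂ)) * (Real.exp (-x ^ 2) : ℂ))
            = fun x : ℝ => ((RCLike.ofReal (K := ℂ))
                ((PHr k).eval (x + a) ^ 2 * Real.exp (-x ^ 2))) := by
          funext x
          rw [show (x : ℂ) + ((a : ℝ) : ℂ) = ((x + a : ℝ) : ℂ) from by push_cast; ring,
            ofReal_eval_PHc]
          show _ = ((((PHr k).eval (x + a) ^ 2 * Real.exp (-x ^ 2) : ℝ)) : ℂ)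
          push_cast
          ring
        rw [hpt, integral_ofReal]
        exact Complex.ofReal_re _
    _ = ∫ x : ℝ, Real.exp (2 * a * x) * hermiteFunR k x ^ 2 := by
        have hshift : ∫ x : ℝ, (PHr k).eval (x + a) ^ 2 * Real.exp (-x ^ 2)
            = ∫ x : ℝ, (PHr k).eval x ^ 2 * Real.exp (-(x - a) ^ 2) := by
          rw [← MeasureTheory.integral_add_right_eq_self
            (fun y : ℝ => (PHr k).eval y ^ 2 * Real.exp (-(y - a) ^ 2)) a]
          refine MeasureTheory.integral_congr_ae (Filter.Eventually.of_forall fun x => ?_)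
          show _ = eval (x + a) (PHr k) ^ 2 * Real.exp (-(x + a - a) ^ 2)
          rw [show (x + a - a : ℝ) = x from by ring]
        rw [hshift, ← integral_const_mul]
        exact (MeasureTheory.integral_congr_ae (Filter.Eventually.of_forall hR)).symm
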